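/- For all n ≥ 0, L^{(k)}_n(x,s) equals the trace of the n-th power of the k×k companion-type matrix A_k(x,s). -/

import Mathlib

set_option maxHeartbeats 2000000

/-- The `k × k` companion-type matrix `A_k(x,s)` with `a(i,i+1) = 1` for `0 ≤ i < k-1`,
`a(k-1,0) = s`, `a(k-1,k-1) = x`, and `0` otherwise. -/
noncomputable def Amat (k : ℕ) (x s : ℝ) : Matrix (Fin k) (Fin k) ℝ :=
  Matrix.of fun i j =>
    (if (i : ℕ) + 1 = (j : ℕ) then (1 : ℝ) else 0) +
    (if (i : ℕ) = k - 1 ∧ (j : ℕ) = 0 then s else 0) +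
    (if (i : ℕ) = k - 1 ∧ (j : ℕ) = k - 1 then x else 0)

/-- Generalized Lucas polynomials. -/
noncomputable def genLucas (k n : ℕ) (x s : ℝ) : ℝ :=
  if n = 0 then (k : ℝ)
  else ∑ j ∈ Finset.range (n / k + 1),
    ((n : ℝ) / ((n - (k - 1) * j : ℕ) : ℝ)) *
      (Nat.choose (n - (k - 1) * j) j : ℝ) * s ^ j * x ^ (n - k * j)

noncomputable def Mmat (k : ℕ) (x s : ℝ) (m : ℕ) : Matrix (Fin k) (Fin k) ℝ :=
  Matrix.of fun i j =>
    (if (i : ℕ) + m = (j : ℕ) then (1:ℝ) else 0) +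
    (if k ≤ (i : ℕ) + m ∧ (j : ℕ) = k - 1 then x ^ ((i:ℕ) + m + 1 - k) else 0) +
    (if (j : ℕ) + k ≤ (i : ℕ) + m then s * x ^ ((i:ℕ) + m - k - (j:ℕ)) else 0)

lemma Mmat_zero (k : ℕ) (x s : ℝ) : Mmat k x s 0 = 1 := by
  ext i j
  have hi := i.isLt; have hj := j.isLt
  simp only [Mmat, Matrix.of_apply, Matrix.one_apply, Nat.add_zero, Fin.ext_iff]
  split_ifs <;> first | (exfalso; omega) | norm_num

lemma Mmat_one (k : ℕ) (x s : ℝ) : Mmat k x s 1 = Amat k x s := by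
  ext i j
  have hi := i.isLt; have hj := j.isLt
  simp only [Mmat, Amat, Matrix.of_apply]
  split_ifs <;> try (exfalso; omega)
  all_goals try simp [show (i:ℕ)+1+1-k = 1 from by omega]
  all_goals try simp [show (i:ℕ)+1-k-(j:ℕ) = 0 from by omega]
  all_goals try norm_num
  all_goals ring

lemma Amat_mul_Mmat (k : ℕ) (x s : ℝ) (m : ℕ) (hm : m + 1 ≤ k) :
    Amat k x s * Mmat k x s m = Mmat k x s (m + 1) := by
  have hk : 1 ≤ k := by omega
  ext i j
  rw [Matrix.mul_apply]
  have hi := i.isLt; have hj := j.isLt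
  by_cases hik : (i:ℕ) + 1 < k
  · -- row i of A is e_{i+1}
    have key : ∀ l : Fin k, Amat k x s i l * Mmat k x s m l j
        = if l = (⟨(i:ℕ)+1, hik⟩ : Fin k) then Mmat k x s m l j else 0 := by
      intro l
      have hl := l.isLt
      simp only [Amat, Matrix.of_apply]
      by_cases h : l = (⟨(i:ℕ)+1, hik⟩ : Fin k)
      · subst h
        rw [if_pos rfl, if_pos rfl, if_neg (by omega), if_neg (by omega)]
        ring
      · have hne : ¬((i:ℕ) + 1 = (l:ℕ)) := fun hc => h (Fin.ext hc.symm)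
        rw [if_neg h, if_neg hne, if_neg (by omega), if_neg (by omega)]
        ring
    rw [Finset.sum_congr rfl (fun l _ => key l), Finset.sum_ite_eq' Finset.univ]
    simp only [Finset.mem_univ, if_true]
    simp only [Mmat, Matrix.of_apply, Fin.val_mk]
    have e1 : (i:ℕ) + 1 + m = (i:ℕ) + (m + 1) := by omega
    rw [e1]
  · -- i = k-1
    have hik' : (i:ℕ) = k - 1 := by omega
    have key : ∀ l : Fin k, Amat k x s i l * Mmat k x s m l j
        = (if l = (⟨0, hk⟩ : Fin k) then s * Mmat k x s m l j else 0)
          + (if l = (⟨k-1, by omega⟩ : Fin k) then x * Mmat k x s m l j else 0) := by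
      intro l
      have hl := l.isLt
      simp only [Amat, Matrix.of_apply, Fin.ext_iff, Fin.val_mk]
      rw [if_neg (by omega)]
      by_cases h0 : (l:ℕ) = 0 <;> by_cases h1 : (l:ℕ) = k - 1
      · rw [if_pos ⟨hik', h0⟩, if_pos ⟨hik', h1⟩, if_pos h0, if_pos h1]; ring
      · rw [if_pos ⟨hik', h0⟩, if_neg (by omega), if_pos h0, if_neg h1]; ring
      · rw [if_neg (by omega), if_pos ⟨hik', h1⟩, if_neg h0, if_pos h1]; ring
      · rw [if_neg (by omega), if_neg (by omega), if_neg h0, if_neg h1]; ring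
    rw [Finset.sum_congr rfl (fun l _ => key l), Finset.sum_add_distrib,
      Finset.sum_ite_eq' Finset.univ, Finset.sum_ite_eq' Finset.univ]
    simp only [Finset.mem_univ, if_true]
    simp only [Mmat, Matrix.of_apply, Fin.val_mk]
    simp only [hik']
    split_ifs <;> try (exfalso; omega)
    all_goals try simp only [show k - 1 + m + 1 - k = m from by omega]
    all_goals try simp only [show k - 1 + (m+1) + 1 - k = m + 1 from by omega]
    all_goals try simp only [show k - 1 + (m+1) - k - (j:ℕ) = m - (j:ℕ) from by omega]
    all_goals try simp only [show k - 1 + m - k - (j:ℕ) = m - 1 - (j:ℕ) from by omega]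
    all_goals try ring
    all_goals try (rw [show m - (j:ℕ) = (m - 1 - (j:ℕ)) + 1 from by omega, pow_succ]; ring)
    all_goals try (simp only [show m - (j:ℕ) = 0 from by omega, pow_zero]; ring)
    all_goals try (simp only [show m = 0 from by omega, pow_zero]; ring)
    all_goals try (simp only [show (j:ℕ) = 0 from by omega, pow_zero]; ring)
    all_goals try (simp only [show (j:ℕ) = 0 from by omega, show m = 0 from by omega, pow_zero]; ring)

lemma Amat_pow_eq (k : ℕ) (x s : ℝ) (m : ℕ) (hm : m ≤ k) :
    Amat k x s ^ m = Mmat k x s m := by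
  induction m with
  | zero => rw [pow_zero, Mmat_zero]
  | succ n ih => rw [pow_succ', ih (by omega), Amat_mul_Mmat k x s n hm]

lemma Amat_pow_k (k : ℕ) (hk : 1 ≤ k) (x s : ℝ) :
    Amat k x s ^ k = x • Amat k x s ^ (k - 1) + s • 1 := by
  rw [Amat_pow_eq k x s k le_rfl, Amat_pow_eq k x s (k-1) (by omega)]
  ext i j
  have hi := i.isLt; have hj := j.isLt
  simp only [Mmat, Matrix.of_apply, Matrix.add_apply, Matrix.smul_apply,
    Matrix.one_apply, smul_eq_mul, Fin.ext_iff]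
  split_ifs <;> try (exfalso; omega)
  all_goals try simp only [show (i:ℕ) + k + 1 - k = (i:ℕ) + 1 from by omega]
  all_goals try simp only [show (i:ℕ) + k - k - (j:ℕ) = (i:ℕ) - (j:ℕ) from by omega]
  all_goals try simp only [show (i:ℕ) + (k-1) + 1 - k = (i:ℕ) from by omega]
  all_goals try simp only [show (i:ℕ) + (k-1) - k - (j:ℕ) = (i:ℕ) - 1 - (j:ℕ) from by omega]
  all_goals try ring
  all_goals try (simp only [show (i:ℕ) - (j:ℕ) = ((i:ℕ) - 1 - (j:ℕ)) + 1 from by omega, pow_succ]; ring)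
  all_goals try (simp only [show (i:ℕ) - (j:ℕ) = 0 from by omega, pow_zero]; ring)
  all_goals try (simp only [show (i:ℕ) = 0 from by omega, pow_zero]; ring)

lemma trace_Mmat (k : ℕ) (x s : ℝ) (m : ℕ) (h1 : 1 ≤ m) (h2 : m < k) :
    (Mmat k x s m).trace = x ^ m := by
  have hk : 1 ≤ k := by omega
  rw [Matrix.trace]
  have key : ∀ i : Fin k, (Mmat k x s m).diag i
      = if i = (⟨k-1, by omega⟩ : Fin k) then x ^ m else 0 := by
    intro i
    have hi := i.isLt
    simp only [Matrix.diag, Mmat, Matrix.of_apply, Fin.ext_iff, Fin.val_mk]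
    by_cases h : (i:ℕ) = k - 1
    · rw [if_pos h, if_neg (by omega), if_pos ⟨by omega, h⟩, if_neg (by omega),
        show (i:ℕ) + m + 1 - k = m from by omega]
      ring
    · rw [if_neg h, if_neg (by omega), if_neg (by omega), if_neg (by omega)]
      ring
  rw [Finset.sum_congr rfl (fun i _ => key i), Finset.sum_ite_eq' Finset.univ]
  simp

lemma trace_Amat_pow_rec (k : ℕ) (hk : 1 ≤ k) (x s : ℝ) (n : ℕ) (hn : k ≤ n) :
    (Amat k x s ^ n).trace
      = x * (Amat k x s ^ (n-1)).trace + s * (Amat k x s ^ (n-k)).trace := by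
  have h1 : Amat k x s ^ n = Amat k x s ^ (n-k) * Amat k x s ^ k := by
    rw [← pow_add]; congr 1; omega
  rw [h1, Amat_pow_k k hk x s, Matrix.mul_add, Matrix.mul_smul, Matrix.mul_smul,
    Matrix.mul_one, ← pow_add, show n - k + (k-1) = n - 1 from by omega,
    Matrix.trace_add, Matrix.trace_smul, Matrix.trace_smul, smul_eq_mul, smul_eq_mul]

/-- Natural-number coefficients of the generalized Lucas polynomials. -/
def dcoef (k n j : ℕ) : ℕ :=
  if j = 0 then 1
  else (n - (k-1)*j).choose j + (k-1) * ((n - (k-1)*j - 1).choose (j-1))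

lemma dcoef_mul (k n j : ℕ) (hk : 1 ≤ k) (hkj : k * j ≤ n) :
    n * Nat.choose (n - (k-1)*j) j = (n - (k-1)*j) * dcoef k n j := by
  have hjt : j ≤ k * j := Nat.le_mul_of_pos_left j hk
  have h1 : (k-1)*j = k*j - j := by rw [Nat.sub_mul, one_mul]
  rcases Nat.eq_zero_or_pos j with hj | hj
  · subst hj; simp [dcoef]
  · have hj0 : j ≠ 0 := by omega
    rw [dcoef, if_neg hj0]
    set m := n - (k-1)*j with hm
    have hmj : m = n - k*j + j := by omega
    have hm1 : 1 ≤ m := by omega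
    have key : m * Nat.choose (m-1) (j-1) = Nat.choose m j * j := by
      have := Nat.add_one_mul_choose_eq (m-1) (j-1)
      rwa [show m - 1 + 1 = m from by omega, show j - 1 + 1 = j from by omega] at this
    have : m * (Nat.choose m j + (k-1) * Nat.choose (m-1) (j-1))
        = m * Nat.choose m j + (k-1) * (m * Nat.choose (m-1) (j-1)) := by ring
    rw [this, key]
    have hn : n = m + (k-1)*j := by omega
    calc n * Nat.choose m j = (m + (k-1)*j) * Nat.choose m j := by rw [← hn]
    _ = m * Nat.choose m j + (k-1) * (Nat.choose m j * j) := by ring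

lemma dcoef_real (k n j : ℕ) (hk : 1 ≤ k) (hn : 1 ≤ n) (hkj : k * j ≤ n) :
    ((n : ℝ) / ((n - (k - 1) * j : ℕ) : ℝ)) * (Nat.choose (n - (k - 1) * j) j : ℝ)
      = (dcoef k n j : ℝ) := by
  have hjt : j ≤ k * j := Nat.le_mul_of_pos_left j hk
  have h1 : (k-1)*j = k*j - j := by rw [Nat.sub_mul, one_mul]
  have hm1 : 1 ≤ n - (k-1)*j := by
    rcases Nat.eq_zero_or_pos j with hj | hj
    · subst hj; simpa using hn
    · omega
  have hmne : ((n - (k-1)*j : ℕ) : ℝ) ≠ 0 := by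
    simp only [ne_eq, Nat.cast_eq_zero]; omega
  rw [div_mul_eq_mul_div, div_eq_iff hmne]
  exact_mod_cast (dcoef_mul k n j hk hkj).trans (Nat.mul_comm _ _)

/-- genLucas in terms of natural coefficients. -/
lemma genLucas_dcoef (k n : ℕ) (x s : ℝ) (hk : 1 ≤ k) (hn : 1 ≤ n) :
    genLucas k n x s
      = ∑ j ∈ Finset.range (n / k + 1), (dcoef k n j : ℝ) * s ^ j * x ^ (n - k * j) := by
  rw [genLucas, if_neg (by omega)]
  refine Finset.sum_congr rfl fun j hj => ?_
  rw [Finset.mem_range] at hj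
  have hkj : k * j ≤ n := by
    have : j ≤ n / k := by omega
    calc k * j = j * k := by ring
    _ ≤ n / k * k := Nat.mul_le_mul_right k this
    _ ≤ n := Nat.div_mul_le_self n k
  rw [dcoef_real k n j hk hn hkj]

lemma dcoef_pascal (k n j : ℕ) (hk : 1 ≤ k) (hj : 1 ≤ j) (hkj : k * j + 1 ≤ n) :
    dcoef k n j = dcoef k (n-1) j + dcoef k (n-k) (j-1) := by
  have hjt : j ≤ k * j := Nat.le_mul_of_pos_left j hk
  have h1 : (k-1)*j = k*j - j := by rw [Nat.sub_mul, one_mul]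
  have h2 : (k-1)*(j-1) = k*j - k - (j-1) := by
    rw [Nat.sub_mul, one_mul, Nat.mul_sub, Nat.mul_one] <;> omega
  have hkt : k ≤ k * j := Nat.le_mul_of_pos_right k hj
  have h3 : k + j ≤ k * j + 1 := by nlinarith
  have hm2 : 2 ≤ n - (k-1)*j := by omega
  have e1 : n - 1 - (k-1)*j = n - (k-1)*j - 1 := by omega
  have e2 : n - k - (k-1)*(j-1) = n - (k-1)*j - 1 := by omega
  have hj0 : j ≠ 0 := by omega
  rw [dcoef, if_neg hj0, dcoef, if_neg hj0, dcoef, e1, e2]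
  set m := n - (k-1)*j with hm
  clear_value m
  obtain ⟨m', rfl⟩ : ∃ m', m = m' + 2 := ⟨m - 2, by omega⟩
  rcases j with _ | j
  · omega
  rcases j with _ | j'
  · -- j = 1
    simp [Nat.choose_one_right]
    omega
  · -- j ≥ 2
    rw [if_neg (by omega)]
    simp only [Nat.add_sub_cancel, show m' + 2 - 1 = m' + 1 from by omega,
      show j' + 1 + 1 - 1 = j' + 1 from by omega,
      show m' + 1 - 1 = m' from by omega, show j' + 1 - 1 = j' from by omega]
    rw [Nat.choose_succ_succ (m'+1) (j'+1), Nat.choose_succ_succ m' j']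
    ring

lemma dcoef_top (k j : ℕ) (hk : 1 ≤ k) (hj : 1 ≤ j) : dcoef k (k*j) j = k := by
  have hjt : j ≤ k * j := Nat.le_mul_of_pos_left j hk
  have h1 : (k-1)*j = k*j - j := by rw [Nat.sub_mul, one_mul]
  have e1 : k*j - (k-1)*j = j := by omega
  rw [dcoef, if_neg (by omega), e1]
  rw [Nat.choose_self, Nat.choose_self]
  omega

lemma genLucas_zero (k : ℕ) (x s : ℝ) : genLucas k 0 x s = (k : ℝ) := by
  simp [genLucas]

lemma genLucas_small (k n : ℕ) (x s : ℝ) (h1 : 1 ≤ n) (h2 : n < k) :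
    genLucas k n x s = x ^ n := by
  rw [genLucas, if_neg (by omega), Nat.div_eq_of_lt h2, Finset.sum_range_one]
  have hne : ((n:ℕ):ℝ) ≠ 0 := by simp; omega
  simp [div_self hne]

lemma genLucas_at_k (k : ℕ) (hk : 1 ≤ k) (x s : ℝ) :
    genLucas k k x s = x ^ k + (k:ℝ) * s := by
  rw [genLucas, if_neg (by omega), Nat.div_self (by omega), Finset.sum_range_succ,
    Finset.sum_range_one]
  have hne : ((k:ℕ):ℝ) ≠ 0 := by simp; omega
  have e1 : k - (k-1)*1 = 1 := by omega
  simp only [Nat.mul_zero, Nat.sub_zero, Nat.mul_one, e1,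
    show k - (k-1) = 1 from by omega, Nat.sub_self,
    Nat.choose_zero_right, Nat.choose_self, Nat.cast_one, pow_zero, pow_one,
    mul_one, div_one, one_mul]
  rw [div_self hne]
  ring

lemma dcoef_zero (k n : ℕ) : dcoef k n 0 = 1 := by simp [dcoef]

lemma genLucas_rec (k : ℕ) (hk : 1 ≤ k) (x s : ℝ) (n : ℕ) (hn : k ≤ n) :
    genLucas k n x s = x * genLucas k (n-1) x s + s * genLucas k (n-k) x s := by
  rcases Nat.eq_or_lt_of_le hn with hnk | hnk
  · -- n = k
    subst hnk
    rw [genLucas_at_k k hk x s, Nat.sub_self, genLucas_zero]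
    rcases Nat.eq_or_lt_of_le hk with hk1 | hk2
    · rw [← hk1]; simp [genLucas_zero]
    · have hxp : x * x^(k-1) = x^k := by rw [← pow_succ']; congr 1; omega
      rw [genLucas_small k (k-1) x s (by omega) (by omega), ← hxp]
      ring
  · -- n > k
    have hn1 : 1 ≤ n - 1 := by omega
    have hnk1 : 1 ≤ n - k := by omega
    rw [genLucas_dcoef k n x s hk (by omega), genLucas_dcoef k (n-1) x s hk hn1,
      genLucas_dcoef k (n-k) x s hk hnk1]
    set N := n / k with hN
    have hN1 : 1 ≤ N := by
      rw [hN]; rw [Nat.le_div_iff_mul_le (by omega)]; omega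
    have hNk : N * k ≤ n := Nat.div_mul_le_self n k
    have hsub : (n - k) / k = N - 1 := by
      have := Nat.add_div_right (n - k) (show 0 < k from by omega)
      rw [show n - k + k = n from by omega] at this
      omega
    have hsucc : N = (n-1)/k + (if k ∣ n then 1 else 0) := by
      have := Nat.succ_div (a := n-1) (b := k)
      rw [show n - 1 + 1 = n from by omega] at this
      rw [hN, this]
    have key : ∀ j : ℕ, k * (j+1) ≤ n - 1 →
        (dcoef k n (j+1) : ℝ) * s ^ (j+1) * x ^ (n - k * (j+1))
          = x * ((dcoef k (n-1) (j+1) : ℝ) * s ^ (j+1) * x ^ (n - 1 - k * (j+1)))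
            + s * ((dcoef k (n-k) j : ℝ) * s ^ j * x ^ (n - k - k * j)) := by
      intro j hj
      have hp := dcoef_pascal k n (j+1) hk (by omega) (by omega)
      rw [show (j+1)-1 = j from rfl] at hp
      rw [hp]
      push_cast
      have e1 : n - k * (j+1) = (n - 1 - k * (j+1)) + 1 := by
        have : k*(j+1) = k*j + k := by ring
        omega
      have e2 : n - k - k * j = n - k * (j+1) := by
        have : k*(j+1) = k*j + k := by ring
        omega
      rw [e1, e2, e1, pow_succ]
      ring
    rw [hsub, show N - 1 + 1 = N from by omega]
    rw [Finset.sum_range_succ' (fun j => (dcoef k n j : ℝ) * s ^ j * x ^ (n - k * j)) N]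
    simp only [dcoef_zero, Nat.cast_one, one_mul, pow_zero, Nat.mul_zero, Nat.sub_zero]
    have hxn : x * x ^ (n - 1) = x ^ n := by
      rw [← pow_succ']; congr 1; omega
    by_cases hdvd : k ∣ n
    · -- k divides n
      have hkN : k * N = n := by rw [hN]; exact Nat.mul_div_cancel' hdvd
      have hN2 : 2 ≤ N := by
        rcases Nat.lt_or_ge N 2 with h2 | h2
        · exfalso; interval_cases N <;> omega
        · exact h2
      have hndk : (n-1)/k = N - 1 := by rw [if_pos hdvd] at hsucc; omega
      rw [hndk, show N - 1 + 1 = N from by omega,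
        show N = (N-1)+1 from by omega]
      rw [Finset.sum_range_succ
        (fun j => (dcoef k n (j+1) : ℝ) * s ^ (j+1) * x ^ (n - k * (j+1))) (N-1)]
      rw [Finset.sum_range_succ'
        (fun j => (dcoef k (n-1) j : ℝ) * s ^ j * x ^ (n - 1 - k * j)) (N-1)]
      rw [Finset.sum_range_succ
        (fun j => (dcoef k (n-k) j : ℝ) * s ^ j * x ^ (n - k - k * j)) (N-1)]
      have hstep : ∀ j ∈ Finset.range (N-1),
          (dcoef k n (j+1) : ℝ) * s ^ (j+1) * x ^ (n - k * (j+1))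
            = x * ((dcoef k (n-1) (j+1) : ℝ) * s ^ (j+1) * x ^ (n - 1 - k * (j+1)))
              + s * ((dcoef k (n-k) j : ℝ) * s ^ j * x ^ (n - k - k * j)) := by
        intro j hj
        rw [Finset.mem_range] at hj
        refine key j ?_
        have h5 : j + 1 ≤ N - 1 := by omega
        have h6 : k * (j+1) ≤ k * (N-1) := Nat.mul_le_mul_left k h5
        have h7 : k * (N-1) = k*N - k := by rw [Nat.mul_sub, Nat.mul_one]
        have hc9 : k * N = N * k := Nat.mul_comm k N
        omega
      rw [Finset.sum_congr rfl hstep, Finset.sum_add_distrib]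
      -- top terms
      have htop1 : (dcoef k n ((N-1)+1) : ℝ) * s ^ ((N-1)+1) * x ^ (n - k * ((N-1)+1))
          = s * ((dcoef k (n-k) (N-1) : ℝ) * s ^ (N-1) * x ^ (n - k - k * (N-1))) := by
        have hA : dcoef k n ((N-1)+1) = k := by
          have := dcoef_top k N hk (by omega)
          rw [show (N-1)+1 = N from by omega, ← hkN]
          exact this
        have hB : dcoef k (n-k) (N-1) = k := by
          have := dcoef_top k (N-1) hk (by omega)
          rw [show n - k = k * (N-1) from by
            rw [Nat.mul_sub, Nat.mul_one]; omega]
          exact this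
        have e3 : n - k * ((N-1)+1) = 0 := by
          rw [show (N-1)+1 = N from by omega]; omega
        have e4 : n - k - k * (N-1) = 0 := by
          have : k * (N-1) = k*N - k := by rw [Nat.mul_sub, Nat.mul_one]
          omega
        rw [hA, hB, e3, e4, show (N-1)+1 = (N-1)+1 from rfl, pow_succ]
        ring
      rw [htop1]
      simp only [dcoef_zero, Nat.cast_one, one_mul, pow_zero, Nat.mul_zero, Nat.sub_zero]
      rw [mul_add, mul_add, Finset.mul_sum, Finset.mul_sum, hxn]
      ring
    · -- k does not divide n
      have hndk : (n-1)/k = N := by rw [if_neg hdvd] at hsucc; omega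
      rw [hndk]
      rw [Finset.sum_range_succ'
        (fun j => (dcoef k (n-1) j : ℝ) * s ^ j * x ^ (n - 1 - k * j)) N]
      have hstep : ∀ j ∈ Finset.range N,
          (dcoef k n (j+1) : ℝ) * s ^ (j+1) * x ^ (n - k * (j+1))
            = x * ((dcoef k (n-1) (j+1) : ℝ) * s ^ (j+1) * x ^ (n - 1 - k * (j+1)))
              + s * ((dcoef k (n-k) j : ℝ) * s ^ j * x ^ (n - k - k * j)) := by
        intro j hj
        rw [Finset.mem_range] at hj
        refine key j ?_
        have h6 : k * (j+1) ≤ k * N := Nat.mul_le_mul_left k (by omega)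
        have hne2 : k * (j+1) ≠ n := fun hc => hdvd ⟨j+1, hc.symm⟩
        have hc9 : k * N = N * k := Nat.mul_comm k N
        omega
      rw [Finset.sum_congr rfl hstep, Finset.sum_add_distrib]
      simp only [dcoef_zero, Nat.cast_one, one_mul, pow_zero, Nat.mul_zero, Nat.sub_zero]
      rw [mul_add, Finset.mul_sum, Finset.mul_sum, hxn]
      ring

theorem genLucas_eq_trace_pow (k : ℕ) (hk : 1 ≤ k) (x s : ℝ) (n : ℕ) :
    Matrix.trace (Amat k x s ^ n) = genLucas k n x s := by
  induction n using Nat.strong_induction_on with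
  | _ n ih =>
    rcases Nat.lt_or_ge n k with h | h
    · rcases Nat.eq_zero_or_pos n with rfl | hn
      · rw [pow_zero, Matrix.trace_one, genLucas_zero]
        simp
      · rw [Amat_pow_eq k x s n (by omega), trace_Mmat k x s n hn h,
          genLucas_small k n x s hn h]
    · have hn1 : 1 ≤ n := by omega
      rw [trace_Amat_pow_rec k hk x s n h, ih (n-1) (by omega), ih (n-k) (by omega),
        ← genLucas_rec k hk x s n h]
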